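/- Let K be a simplicial complex obtained from a sequence of Stellar subdivisions realizing the barycentric subdivision: ordering the faces of K of dimension ≥ 1 by weakly decreasing cardinality and performing stellar subdivisions at these faces in that order yields the barycentric subdivision sd(K), whose faces are the chains of nonempty faces of K ordered by inclusion. -/

import Mathlib

def IsComplex (K : Finset (Finset ℕ)) : Prop :=
  ∅ ∈ K ∧ ∀ s ∈ K, ∀ t ⊆ s, t ∈ K

/-- The (open) star `st(T,K) = {S ∈ K : T ⊆ S}`. -/
def starC (T : Finset ℕ) (K : Finset (Finset ℕ)) : Finset (Finset ℕ) :=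
  K.filter fun s => T ⊆ s

/-- The link `lk(T,K) = {S ∈ K : S ∩ T = ∅, S ∪ T ∈ K}`. -/
def linkC (T : Finset ℕ) (K : Finset (Finset ℕ)) : Finset (Finset ℕ) :=
  K.filter fun s => s ∩ T = ∅ ∧ s ∪ T ∈ K

/-- The boundary complex `∂T` of the simplex on `T`: all proper subsets of `T`. -/
def bdry (T : Finset ℕ) : Finset (Finset ℕ) := T.powerset.erase T

/-- The join of two complexes (on disjoint vertex sets). -/
def joinC (K L : Finset (Finset ℕ)) : Finset (Finset ℕ) :=
  (K ×ˢ L).image fun p => p.1 ∪ p.2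

/-- The stellar subdivision
`Stellar(T,K) = (K \ st(T,K)) ∪ ({v_T} * ∂T * lk(T,K))`, with `v` the new
vertex `v_T`. -/
def stellar (T : Finset ℕ) (K : Finset (Finset ℕ)) (v : ℕ) : Finset (Finset ℕ) :=
  (K \ starC T K) ∪ joinC (({v} : Finset ℕ).powerset) (joinC (bdry T) (linkC T K))

/-- The barycentric subdivision `sd(K)`: vertices are the nonempty faces of
`K`, and faces are the chains of nonempty faces of `K` under inclusion. -/
def sd (K : Finset (Finset ℕ)) : Finset (Finset (Finset ℕ)) :=
  (K.erase ∅).powerset.filter fun c => ∀ a ∈ c, ∀ b ∈ c, a ⊆ b ∨ b ⊆ a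

/-- Invariant description of the complex after subdividing the faces in `S`. -/
def Pdesc (K : Finset (Finset ℕ)) (ν : Finset ℕ → ℕ) (S : Finset (Finset ℕ))
    (s : Finset ℕ) : Prop :=
  ∃ σ : Finset ℕ, ∃ c : Finset (Finset ℕ),
    s = σ ∪ c.image ν ∧ σ ∈ K ∧ c ⊆ S ∧
    (∀ a ∈ c, ∀ b ∈ c, a ⊆ b ∨ b ⊆ a) ∧ (∀ T ∈ S, ¬ T ⊆ σ) ∧ (∀ T ∈ c, σ ⊂ T)

lemma mem_joinC {A B : Finset (Finset ℕ)} {s : Finset ℕ} :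
    s ∈ joinC A B ↔ ∃ a ∈ A, ∃ b ∈ B, s = a ∪ b := by
  simp only [joinC, Finset.mem_image, Finset.mem_product, Prod.exists]
  constructor
  · rintro ⟨a, b, ⟨ha, hb⟩, rfl⟩; exact ⟨a, ha, b, hb, rfl⟩
  · rintro ⟨a, ha, b, hb, rfl⟩; exact ⟨a, b, ⟨ha, hb⟩, rfl⟩

lemma mem_stellar_iff {T : Finset ℕ} {C : Finset (Finset ℕ)} {v : ℕ} {s : Finset ℕ} :
    s ∈ stellar T C v ↔ (s ∈ C ∧ ¬ T ⊆ s) ∨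
      ∃ e ⊆ ({v} : Finset ℕ), ∃ b : Finset ℕ, b ⊆ T ∧ b ≠ T ∧
        ∃ l ∈ C, l ∩ T = ∅ ∧ l ∪ T ∈ C ∧ s = e ∪ (b ∪ l) := by
  constructor
  · intro h
    rcases Finset.mem_union.mp h with h | h
    · rcases Finset.mem_sdiff.mp h with ⟨h1, h2⟩
      exact Or.inl ⟨h1, fun hTs => h2 (Finset.mem_filter.mpr ⟨h1, hTs⟩)⟩
    · rcases mem_joinC.mp h with ⟨e, he, b', hb', rfl⟩
      rcases mem_joinC.mp hb' with ⟨b, hb, l, hl, rfl⟩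
      rcases Finset.mem_erase.mp hb with ⟨hbne, hbT⟩
      rcases Finset.mem_filter.mp hl with ⟨hlC, hl1, hl2⟩
      exact Or.inr ⟨e, Finset.mem_powerset.mp he, b, Finset.mem_powerset.mp hbT, hbne,
        l, hlC, hl1, hl2, rfl⟩
  · rintro (⟨h1, h2⟩ | ⟨e, he, b, hbT, hbne, l, hlC, hl1, hl2, rfl⟩)
    · exact Finset.mem_union_left _ (Finset.mem_sdiff.mpr
        ⟨h1, fun hm => h2 (Finset.mem_filter.mp hm).2⟩)
    · refine Finset.mem_union_right _ (mem_joinC.mpr ⟨e, Finset.mem_powerset.mpr he,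
        b ∪ l, mem_joinC.mpr ⟨b, ?_, l, ?_, rfl⟩, rfl⟩)
      · exact Finset.mem_erase.mpr ⟨hbne, Finset.mem_powerset.mpr hbT⟩
      · exact Finset.mem_filter.mpr ⟨hlC, hl1, hl2⟩

section Step
variable {K : Finset (Finset ℕ)} {ν : Finset ℕ → ℕ}

/-- A face of `K` contained in `σ ∪ ν''c` is contained in `σ`. -/
lemma subset_orig (hfresh : ∀ T : Finset ℕ, ∀ s ∈ K, ν T ∉ s)
    {U σ : Finset ℕ} {c : Finset (Finset ℕ)} (hU : U ∈ K)
    (h : U ⊆ σ ∪ c.image ν) : U ⊆ σ := by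
  intro x hx
  rcases Finset.mem_union.mp (h hx) with h1 | h1
  · exact h1
  · rcases Finset.mem_image.mp h1 with ⟨T', _, rfl⟩
    exact absurd hx (hfresh T' U hU)

lemma step_char (hK : IsComplex K) (hν : Function.Injective ν)
    (hfresh : ∀ T : Finset ℕ, ∀ s ∈ K, ν T ∉ s)
    {S C : Finset (Finset ℕ)} {T : Finset ℕ}
    (hC : ∀ s, s ∈ C ↔ Pdesc K ν S s)
    (hT : T ∈ K) (hT2 : 2 ≤ T.card) (hTS : T ∉ S)
    (hS2 : ∀ T' ∈ S, 2 ≤ T'.card)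
    (hcard : ∀ T' ∈ S, T.card ≤ T'.card)
    (hup : ∀ T' ∈ K, T ⊂ T' → T' ∈ S) :
    ∀ s, s ∈ stellar T C (ν T) ↔ Pdesc K ν (insert T S) s := by
  have hnsubT : ∀ T' ∈ S, ¬ T' ⊆ T := by
    intro T' hT' hsub
    rcases eq_or_ne T' T with rfl | hne
    · exact hTS hT'
    · have h1 : T'.card < T.card := Finset.card_lt_card (ssubset_of_subset_of_ne hsub hne)
      exact absurd (hcard T' hT') (by omega)
  intro s
  rw [mem_stellar_iff]
  constructor
  · rintro (⟨h1, h2⟩ | ⟨e, he, b, hbT, hbne, l, hlC, hl1, hl2, rfl⟩)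
    · rcases (hC s).mp h1 with ⟨σ, c, rfl, hσ, hcS, hch, hns, hlt⟩
      refine ⟨σ, c, rfl, hσ, hcS.trans (Finset.subset_insert _ _), hch, ?_, hlt⟩
      intro T' hT'
      rcases Finset.mem_insert.mp hT' with rfl | hT'
      · exact fun hsub => h2 (hsub.trans Finset.subset_union_left)
      · exact hns T' hT'
    · -- the new cone part
      rcases (hC (l ∪ T)).mp hl2 with ⟨σ₂, c₂, heq, hσ₂, hc₂, hch₂, hns₂, hlt₂⟩
      -- σ₂ = T
      have hTσ₂ : T ⊆ σ₂ := by
        refine subset_orig hfresh (c := c₂) hT ?_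
        rw [← heq]; exact Finset.subset_union_right
      have hσ₂T : σ₂ = T := by
        by_contra hne
        have hss : T ⊂ σ₂ := ssubset_of_subset_of_ne hTσ₂ (Ne.symm hne)
        exact hns₂ σ₂ (hup σ₂ hσ₂ hss) (subset_refl _)
      rw [hσ₂T] at heq hns₂ hlt₂
      -- l = ν '' c₂
      have hl : l = c₂.image ν := by
        ext x
        constructor
        · intro hx
          have hx' : x ∈ T ∪ c₂.image ν := by rw [← heq]; exact Finset.mem_union_left _ hx
          rcases Finset.mem_union.mp hx' with h | h
          · exact absurd (Finset.mem_inter.mpr ⟨hx, h⟩) (by simp [hl1])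
          · exact h
        · intro hx
          rcases Finset.mem_image.mp hx with ⟨T', hT', rfl⟩
          have hx' : ν T' ∈ l ∪ T := by
            rw [heq]; exact Finset.mem_union_right _ hx
          rcases Finset.mem_union.mp hx' with h | h
          · exact h
          · exact absurd h (hfresh T' T hT)
      subst hl
      have hbK : b ∈ K := hK.2 T hT b hbT
      have hnb : ∀ T' ∈ insert T S, ¬ T' ⊆ b := by
        intro T' hT' hsub
        rcases Finset.mem_insert.mp hT' with rfl | hT'
        · exact hbne (Finset.Subset.antisymm hbT hsub)
        · exact hnsubT T' hT' (hsub.trans hbT)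
      rcases Finset.subset_singleton_iff.mp he with rfl | rfl
      · -- e = ∅ : face b ∪ ν '' c₂
        refine ⟨b, c₂, by simp, hbK, hc₂.trans (Finset.subset_insert _ _), hch₂, hnb, ?_⟩
        intro T' hT'
        exact lt_of_le_of_lt hbT (hlt₂ T' hT')
      · -- e = {ν T} : face {ν T} ∪ b ∪ ν '' c₂
        refine ⟨b, insert T c₂, ?_, hbK, ?_, ?_, hnb, ?_⟩
        · rw [Finset.image_insert]
          ext x
          simp only [Finset.mem_union, Finset.mem_insert, Finset.mem_image,
            Finset.mem_singleton]
          tauto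
        · exact Finset.insert_subset_insert _ hc₂
        · intro a ha b' hb'
          rcases Finset.mem_insert.mp ha with ha | ha <;>
            rcases Finset.mem_insert.mp hb' with hb' | hb'
          · rw [ha, hb']; exact Or.inl (subset_refl _)
          · rw [ha]; exact Or.inl (hlt₂ _ hb').subset
          · rw [hb']; exact Or.inr (hlt₂ _ ha).subset
          · exact hch₂ _ ha _ hb'
        · intro T' hT'
          rcases Finset.mem_insert.mp hT' with rfl | hT'
          · exact ssubset_of_subset_of_ne hbT hbne
          · exact lt_of_le_of_lt hbT (hlt₂ T' hT')
  · rintro ⟨σ, c, rfl, hσ, hcS, hch, hns, hlt⟩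
    by_cases hTc : T ∈ c
    · -- new face containing ν T
      right
      refine ⟨{ν T}, subset_refl _, σ, (hlt T hTc).subset, (hlt T hTc).ne,
        (c.erase T).image ν, ?_, ?_, ?_, ?_⟩
      · -- link element in C
        refine (hC _).mpr ⟨∅, c.erase T, by simp, hK.1, ?_, ?_, ?_, ?_⟩
        · intro a ha
          rcases Finset.mem_insert.mp (hcS (Finset.mem_of_mem_erase ha)) with rfl | h
          · exact absurd rfl (Finset.ne_of_mem_erase ha)
          · exact h
        · exact fun a ha b hb => hch a (Finset.mem_of_mem_erase ha) b (Finset.mem_of_mem_erase hb)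
        · intro T' hT' hsub
          have h1 := hS2 T' hT'
          rw [Finset.subset_empty.mp hsub] at h1
          simp at h1
        · intro T' hT'
          exact lt_of_le_of_lt (Finset.empty_subset σ) (hlt T' (Finset.mem_of_mem_erase hT'))
      · -- disjoint from T
        ext x
        simp only [Finset.mem_inter, Finset.mem_image, Finset.notMem_empty, iff_false,
          not_and]
        rintro ⟨T', _, rfl⟩ hxT
        exact hfresh T' T hT hxT
      · -- union with T in C
        refine (hC _).mpr ⟨T, c.erase T, Finset.union_comm _ _, hT, ?_, ?_, hnsubT, ?_⟩
        · intro a ha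
          rcases Finset.mem_insert.mp (hcS (Finset.mem_of_mem_erase ha)) with rfl | h
          · exact absurd rfl (Finset.ne_of_mem_erase ha)
          · exact h
        · exact fun a ha b hb => hch a (Finset.mem_of_mem_erase ha) b (Finset.mem_of_mem_erase hb)
        · intro T' hT'
          have hT'c := Finset.mem_of_mem_erase hT'
          have hT'ne := Finset.ne_of_mem_erase hT'
          rcases hch T hTc T' hT'c with h | h
          · exact ssubset_of_subset_of_ne h (Ne.symm hT'ne)
          · exfalso
            have hT'S : T' ∈ S := by
              rcases Finset.mem_insert.mp (hcS hT'c) with rfl | hh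
              · exact absurd rfl hT'ne
              · exact hh
            have h1 : T'.card < T.card := Finset.card_lt_card
              (ssubset_of_subset_of_ne h hT'ne)
            have := hcard T' hT'S
            omega
      · -- expression for s
        conv_lhs => rw [← Finset.insert_erase hTc]
        rw [Finset.image_insert]
        ext x
        simp only [Finset.mem_union, Finset.mem_insert, Finset.mem_image,
          Finset.mem_singleton]
        tauto
    · -- old face
      left
      have hcS' : c ⊆ S := by
        intro a ha
        rcases Finset.mem_insert.mp (hcS ha) with rfl | h
        · exact absurd ha hTc
        · exact h
      constructor
      · exact (hC _).mpr ⟨σ, c, rfl, hσ, hcS', hch,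
          fun T' hT' => hns T' (Finset.mem_insert_of_mem hT'), hlt⟩
      · intro hsub
        exact hns T (Finset.mem_insert_self _ _) (subset_orig hfresh hT hsub)

end Step

section Fold
variable {K : Finset (Finset ℕ)} {ν : Finset ℕ → ℕ}

lemma base_char (hK : IsComplex K) : ∀ s, s ∈ K ↔ Pdesc K ν ∅ s := by
  intro s
  constructor
  · intro hs
    exact ⟨s, ∅, by simp, hs, by simp, by simp, by simp, by simp⟩
  · rintro ⟨σ, c, rfl, hσ, hc, -, -, -⟩
    rw [Finset.subset_empty.mp hc]
    simpa using hσ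

lemma fold_char (hK : IsComplex K) (hν : Function.Injective ν)
    (hfresh : ∀ T : Finset ℕ, ∀ s ∈ K, ν T ∉ s) :
    ∀ (L : List (Finset ℕ)) (S C : Finset (Finset ℕ)),
    (∀ s, s ∈ C ↔ Pdesc K ν S s) →
    L.Nodup → L.Pairwise (fun a b => b.card ≤ a.card) →
    (∀ T ∈ L, T ∈ K ∧ 2 ≤ T.card) →
    (∀ T ∈ L, T ∉ S) →
    (∀ T' ∈ S, 2 ≤ T'.card) →
    (∀ T ∈ L, ∀ T' ∈ S, T.card ≤ T'.card) →
    (∀ T' ∈ K, 2 ≤ T'.card → T' ∈ S ∨ T' ∈ L) →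
    ∀ s, s ∈ L.foldl (fun C T => stellar T C (ν T)) C ↔
      Pdesc K ν (S ∪ L.toFinset) s := by
  intro L
  induction L with
  | nil => intro S C hC _ _ _ _ _ _ _ s; simpa using hC s
  | cons T L ih =>
    intro S C hC hnd hsort hmemL hnotS hS2 hcard hclosed s
    have hT := hmemL T List.mem_cons_self
    have hup : ∀ T' ∈ K, T ⊂ T' → T' ∈ S := by
      intro T' hT'K hss
      have h2 : 2 ≤ T'.card := le_trans hT.2 (Finset.card_le_card hss.subset)
      rcases hclosed T' hT'K h2 with h | h
      · exact h
      · rcases List.mem_cons.mp h with rfl | h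
        · exact absurd rfl hss.ne
        · have := (List.pairwise_cons.mp hsort).1 T' h
          have := Finset.card_lt_card hss
          omega
    have hstep := step_char hK hν hfresh hC hT.1 hT.2
      (hnotS T List.mem_cons_self) hS2 (hcard T List.mem_cons_self) hup
    have hres := ih (insert T S) (stellar T C (ν T)) hstep
      (List.nodup_cons.mp hnd).2 (List.pairwise_cons.mp hsort).2
      (fun T' h => hmemL T' (List.mem_cons_of_mem _ h))
      ?_ ?_ ?_ ?_
    · rw [List.foldl_cons]
      rw [hres s, List.toFinset_cons, Finset.union_insert, Finset.insert_union]
    · intro T' h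
      simp only [Finset.mem_insert, not_or]
      exact ⟨fun he => (List.nodup_cons.mp hnd).1 (he ▸ h),
        hnotS T' (List.mem_cons_of_mem _ h)⟩
    · intro T' h
      rcases Finset.mem_insert.mp h with rfl | h
      · exact hT.2
      · exact hS2 T' h
    · intro T'' h T' h'
      rcases Finset.mem_insert.mp h' with rfl | h'
      · exact (List.pairwise_cons.mp hsort).1 T'' h
      · exact hcard T'' (List.mem_cons_of_mem _ h) T' h'
    · intro T' hT'K h2
      rcases hclosed T' hT'K h2 with h | h
      · exact Or.inl (Finset.mem_insert_of_mem h)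
      · rcases List.mem_cons.mp h with rfl | h
        · exact Or.inl (Finset.mem_insert_self _ _)
        · exact Or.inr h

end Fold

/-- performing stellar subdivisions at all faces of `K` of
dimension ≥ 1, in any order of weakly decreasing cardinality and with fresh
new vertices `ν T`, yields a complex isomorphic to the barycentric
subdivision `sd(K)` (via a relabelling `φ` of the vertices, injective on the
vertex set of the result). -/
theorem stellar_sequence_gives_barycentric
    (K : Finset (Finset ℕ)) (hK : IsComplex K)
    (Lst : List (Finset ℕ))
    (hmem : ∀ T, T ∈ Lst ↔ T ∈ K ∧ 2 ≤ T.card)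
    (hnodup : Lst.Nodup)
    (hsorted : Lst.Pairwise fun a b => b.card ≤ a.card)
    (ν : Finset ℕ → ℕ) (hν : Function.Injective ν)
    (hνfresh : ∀ T : Finset ℕ, ∀ s ∈ K, ν T ∉ s) :
    ∃ φ : ℕ → Finset ℕ,
      Set.InjOn φ ↑((Lst.foldl (fun C T => stellar T C (ν T)) K).sup id) ∧
      (Lst.foldl (fun C T => stellar T C (ν T)) K).image (fun s => s.image φ) =
        sd K := by
  classical
  set F := Lst.foldl (fun C T => stellar T C (ν T)) K with hFdef
  have hF : ∀ s, s ∈ F ↔ Pdesc K ν Lst.toFinset s := by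
    have h := fold_char hK hν hνfresh Lst ∅ K (base_char hK) hnodup hsorted
      (fun T hT => (hmem T).mp hT) (by simp) (by simp) (by simp)
      (fun T' h1 h2 => Or.inr ((hmem T').mpr ⟨h1, h2⟩))
    intro s
    rw [hFdef, h s, Finset.empty_union]
  have hLK : ∀ T ∈ Lst.toFinset, T ∈ K ∧ 2 ≤ T.card := by
    intro T hT; exact (hmem T).mp (List.mem_toFinset.mp hT)
  set φ : ℕ → Finset ℕ := Function.extend ν id (fun n => ({n} : Finset ℕ)) with hφdef
  have hφν : ∀ T, φ (ν T) = T := fun T => hν.extend_apply id _ T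
  have hφx : ∀ x : ℕ, (∃ t ∈ K, x ∈ t) → φ x = {x} := by
    rintro x ⟨t, ht, hxt⟩
    refine Function.extend_apply' _ _ _ ?_
    rintro ⟨T, rfl⟩
    exact hνfresh T t ht hxt
  -- vertex dichotomy
  have hvert : ∀ x ∈ F.sup id, (∃ t ∈ K, x ∈ t) ∨ ∃ T ∈ Lst.toFinset, x = ν T := by
    intro x hx
    rcases Finset.mem_sup.mp hx with ⟨s, hs, hxs⟩
    rcases (hF s).mp hs with ⟨σ, c, rfl, hσ, hc, -, -, -⟩
    rcases Finset.mem_union.mp hxs with h | h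
    · exact Or.inl ⟨σ, hσ, h⟩
    · rcases Finset.mem_image.mp h with ⟨T, hT, rfl⟩
      exact Or.inr ⟨T, hc hT, rfl⟩
  refine ⟨φ, ?_, ?_⟩
  · -- injectivity on the vertex set
    intro x hx y hy hxy
    rcases hvert x hx with hx' | ⟨T, hT, rfl⟩ <;> rcases hvert y hy with hy' | ⟨T', hT', rfl⟩
    · rw [hφx x hx', hφx y hy'] at hxy
      exact Finset.singleton_injective hxy
    · rw [hφx x hx', hφν T'] at hxy
      have := (hLK T' hT').2
      rw [← hxy] at this
      simp at this
    · rw [hφν T, hφx y hy'] at hxy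
      have := (hLK T hT).2
      rw [hxy] at this
      simp at this
    · rw [hφν T, hφν T'] at hxy
      rw [hxy]
  · -- the image is the barycentric subdivision
    ext d
    simp only [Finset.mem_image]
    rw [sd, Finset.mem_filter, Finset.mem_powerset]
    constructor
    · rintro ⟨s, hs, rfl⟩
      rcases (hF s).mp hs with ⟨σ, c, rfl, hσ, hc, hch, hns, hlt⟩
      have hσ1 : σ.card ≤ 1 := by
        by_contra h
        exact hns σ (List.mem_toFinset.mpr ((hmem σ).mpr ⟨hσ, by omega⟩)) (subset_refl _)
      have himg : (σ ∪ c.image ν).image φ = σ.image (fun x => ({x} : Finset ℕ)) ∪ c := by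
        rw [Finset.image_union, Finset.image_image]
        congr 1
        · exact Finset.image_congr (fun x hx => hφx x ⟨σ, hσ, hx⟩)
        · rw [show (φ ∘ ν) = id from funext hφν, Finset.image_id]
      rw [himg]
      constructor
      · intro a ha
        rcases Finset.mem_union.mp ha with h | h
        · rcases Finset.mem_image.mp h with ⟨x, hx, rfl⟩
          exact Finset.mem_erase.mpr ⟨Finset.singleton_ne_empty x,
            hK.2 σ hσ {x} (Finset.singleton_subset_iff.mpr hx)⟩
        · have := hLK a (hc h)
          refine Finset.mem_erase.mpr ⟨?_, this.1⟩
          intro he; rw [he] at this; simp at this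
      · intro a ha b hb
        rcases Finset.mem_union.mp ha with h | h <;> rcases Finset.mem_union.mp hb with h' | h'
        · rcases Finset.mem_image.mp h with ⟨x, hx, rfl⟩
          rcases Finset.mem_image.mp h' with ⟨y, hy, rfl⟩
          have : x = y := by
            have := Finset.card_le_one.mp hσ1
            exact this x hx y hy
          rw [this]; exact Or.inl (subset_refl _)
        · rcases Finset.mem_image.mp h with ⟨x, hx, rfl⟩
          exact Or.inl (Finset.singleton_subset_iff.mpr ((hlt b h').subset hx))
        · rcases Finset.mem_image.mp h' with ⟨y, hy, rfl⟩
          exact Or.inr (Finset.singleton_subset_iff.mpr ((hlt a h).subset hy))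
        · exact hch a h b h'
    · rintro ⟨hd, hchd⟩
      set c : Finset (Finset ℕ) := d.filter (fun a => 2 ≤ a.card) with hcdef
      set e : Finset (Finset ℕ) := d.filter (fun a => ¬ 2 ≤ a.card) with hedef
      have hde : c ∪ e = d := Finset.filter_union_filter_not_eq _ d
      have hcsub : c ⊆ Lst.toFinset := by
        intro a ha
        rcases Finset.mem_filter.mp ha with ⟨had, h2⟩
        exact List.mem_toFinset.mpr ((hmem a).mpr ⟨Finset.mem_of_mem_erase (hd had), h2⟩)
      have hcd : ∀ a ∈ c, a ∈ d := fun a ha => (Finset.mem_filter.mp ha).1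
      have hsing : ∀ a ∈ e, ∃ x, a = {x} := by
        intro a ha
        rcases Finset.mem_filter.mp ha with ⟨had, h2⟩
        have hne := (Finset.mem_erase.mp (hd had)).1
        have : a.card = 1 := by
          have := Finset.card_pos.mpr (Finset.nonempty_of_ne_empty hne)
          omega
        exact Finset.card_eq_one.mp this
      have hKe : ∀ T ∈ Lst.toFinset, ∀ σ : Finset ℕ, σ.card ≤ 1 → ¬ T ⊆ σ := by
        intro T hT σ h1 hsub
        have := (hLK T hT).2
        have := Finset.card_le_card hsub
        omega
      have hwit : ∀ σ : Finset ℕ, σ ∈ K → σ.card ≤ 1 →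
          σ.image (fun x => ({x} : Finset ℕ)) = e →
          (∀ T ∈ c, σ ⊂ T) →
          ∃ s ∈ F, s.image φ = d := by
        intro σ hσK hσ1 hσe hσlt
        refine ⟨σ ∪ c.image ν, (hF _).mpr ⟨σ, c, rfl, hσK, hcsub, ?_, ?_, hσlt⟩, ?_⟩
        · exact fun a ha b hb => hchd a (hcd a ha) b (hcd b hb)
        · exact fun T hT => hKe T hT σ hσ1
        · rw [Finset.image_union, Finset.image_image,
            show (φ ∘ ν) = id from funext hφν, Finset.image_id,
            Finset.image_congr (fun x hx => hφx x ⟨σ, hσK, hx⟩), hσe, Finset.union_comm, hde]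
      rcases Finset.eq_empty_or_nonempty e with he | ⟨a, ha⟩
      · refine hwit ∅ hK.1 (by simp) (by simp [he]) ?_
        intro T hT
        have := (hLK T (hcsub hT)).2
        refine Finset.empty_ssubset.mpr (Finset.card_pos.mp (by omega))
      · rcases hsing a ha with ⟨x, rfl⟩
        have hea : e = {({x} : Finset ℕ)} := by
          refine Finset.eq_singleton_iff_unique_mem.mpr ⟨ha, ?_⟩
          intro b hb
          rcases hsing b hb with ⟨y, rfl⟩
          rcases hchd _ (Finset.mem_of_mem_filter _ hb) _ (Finset.mem_of_mem_filter _ ha)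
            with h | h
          · exact Finset.eq_of_subset_of_card_le h (by simp)
          · exact (Finset.eq_of_subset_of_card_le h (by simp)).symm
        have hxK : ({x} : Finset ℕ) ∈ K :=
          Finset.mem_of_mem_erase (hd (Finset.mem_of_mem_filter _ ha))
        refine hwit {x} hxK (by simp) (by simp [hea]) ?_
        intro T hT
        have h2 := (hLK T (hcsub hT)).2
        rcases hchd _ (Finset.mem_of_mem_filter _ ha) _ (hcd T hT) with h | h
        · refine Finset.ssubset_iff_subset_ne.mpr ⟨h, ?_⟩
          intro hh; rw [← hh] at h2; simp at h2
        · have := Finset.card_le_card h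
          simp at this; omega
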